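/- If x₀ rolls on x with rotation R (det R = 1, Rdx₀ = dx) and ω := N₀ × R⁻¹dR N₀ is the induced flat connection form, then the connection form of the rolling with the reflected normal, ω' := N₀ × R'⁻¹dR' N₀ with R' = R(I − 2N₀N₀ᵀ), equals ω' = −ω − 2N₀ × dN₀. -/

import Mathlib

open Matrix

lemma vecMulVec_mulVec' (a b v : Fin 3 → ℂ) :
    vecMulVec a b *ᵥ v = (b ⬝ᵥ v) • a := by
  ext i
  simp [vecMulVec, mulVec, dotProduct, Finset.mul_sum, mul_comm, mul_left_comm]

/-- If `x₀` rolls on `x` with rotation `R` (so `ω = N₀ × R⁻¹dR N₀`), then the connection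
form of the reflected rolling `R' = R(I − 2N₀N₀ᵀ)` is `ω' = −ω − 2N₀ × dN₀`.
Pointwise version: `R, dR` are the rotation and its derivative at a point, `N₀, dN₀`
the unit normal and its derivative. -/
theorem reflected_connection_form
    (R dR : Matrix (Fin 3) (Fin 3) ℂ) (N₀ dN₀ : Fin 3 → ℂ)
    (hR : Rᵀ * R = 1) (hdet : R.det = 1)
    (hN : N₀ ⬝ᵥ N₀ = 1) (hdN : N₀ ⬝ᵥ dN₀ = 0)
    (horth : dRᵀ * R + Rᵀ * dR = 0)
    (R' : Matrix (Fin 3) (Fin 3) ℂ)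
    (hR' : R' = R * (1 - (2 : ℂ) • vecMulVec N₀ N₀))
    (dR' : Matrix (Fin 3) (Fin 3) ℂ)
    (hdR' : dR' = dR * (1 - (2 : ℂ) • vecMulVec N₀ N₀)
        - (2 : ℂ) • (R * (vecMulVec dN₀ N₀ + vecMulVec N₀ dN₀))) :
    N₀ ⨯₃ ((R'⁻¹ * dR') *ᵥ N₀)
      = -(N₀ ⨯₃ ((R⁻¹ * dR) *ᵥ N₀)) - (2 : ℂ) • (N₀ ⨯₃ dN₀) := by
  set P := vecMulVec N₀ N₀ with hP
  set S := (1 : Matrix (Fin 3) (Fin 3) ℂ) - (2 : ℂ) • P with hS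
  have hPP : P * P = P := by
    ext i j
    simp only [hP, Matrix.mul_apply, vecMulVec_apply]
    have h : ∀ k, (N₀ i * N₀ k) * (N₀ k * N₀ j) = (N₀ i * N₀ j) * (N₀ k * N₀ k) := by
      intro k; ring
    rw [Finset.sum_congr rfl fun k _ => h k, ← Finset.mul_sum]
    have : ∑ k, N₀ k * N₀ k = 1 := hN
    rw [this, mul_one]
  have hSS : S * S = 1 := by
    rw [hS]
    simp only [Matrix.sub_mul, Matrix.mul_sub, Matrix.one_mul, Matrix.mul_one,
      Matrix.smul_mul, Matrix.mul_smul, hPP, smul_smul]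
    module
  have hRinv : R⁻¹ = Rᵀ := Matrix.inv_eq_left_inv hR
  have hR'inv : R'⁻¹ = S * Rᵀ := by
    apply Matrix.inv_eq_left_inv
    rw [hR', ← Matrix.mul_assoc, Matrix.mul_assoc S Rᵀ R, hR, Matrix.mul_one, hSS]
  have hSN : S *ᵥ N₀ = -N₀ := by
    rw [hS, Matrix.sub_mulVec, Matrix.one_mulVec, Matrix.smul_mulVec, hP,
      vecMulVec_mulVec', hN, one_smul]
    module
  have hSdN : S *ᵥ dN₀ = dN₀ := by
    rw [hS, Matrix.sub_mulVec, Matrix.one_mulVec, Matrix.smul_mulVec, hP,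
      vecMulVec_mulVec', hdN, zero_smul, smul_zero, sub_zero]
  have hQ : (vecMulVec dN₀ N₀ + vecMulVec N₀ dN₀) *ᵥ N₀ = dN₀ := by
    rw [Matrix.add_mulVec, vecMulVec_mulVec', vecMulVec_mulVec', hN, one_smul,
      dotProduct_comm, hdN, zero_smul, add_zero]
  have hdR'N : dR' *ᵥ N₀ = -(dR *ᵥ N₀) - (2 : ℂ) • (R *ᵥ dN₀) := by
    rw [hdR', Matrix.sub_mulVec, ← Matrix.mulVec_mulVec, hSN,
      Matrix.smul_mulVec, ← Matrix.mulVec_mulVec, hQ, Matrix.mulVec_neg]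
  have hRtR : ∀ v : Fin 3 → ℂ, Rᵀ *ᵥ (R *ᵥ v) = v := by
    intro v; rw [Matrix.mulVec_mulVec, hR, Matrix.one_mulVec]
  have key : (R'⁻¹ * dR') *ᵥ N₀
      = S *ᵥ (-((Rᵀ * dR) *ᵥ N₀)) - (2 : ℂ) • dN₀ := by
    rw [hR'inv, ← Matrix.mulVec_mulVec, hdR'N, ← Matrix.mulVec_mulVec]
    rw [Matrix.mulVec_sub, Matrix.mulVec_neg, Matrix.mulVec_smul, hRtR,
      Matrix.mulVec_mulVec, Matrix.mulVec_sub, Matrix.mulVec_smul, hSdN]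
  -- Now take cross products
  have hScross : ∀ v : Fin 3 → ℂ, N₀ ⨯₃ (S *ᵥ v) = N₀ ⨯₃ v := by
    intro v
    rw [hS, Matrix.sub_mulVec, Matrix.one_mulVec, Matrix.smul_mulVec, hP,
      vecMulVec_mulVec', smul_smul]
    rw [map_sub, _root_.map_smul, cross_self, smul_zero, sub_zero]
  rw [key, map_sub, _root_.map_smul, hScross, map_neg, hRinv]
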